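/- Fix m ∈ M with support H and vacancy numbers p_j, and suppose J ∈ J̄(m). If N is a positive integer such that there exist integers r_a (a = 1,…,s) satisfying p_{j_k}·r_k + 2Σ_{a=1}^s min(j_k, j_a)·m_{j_a}·r_a = N·min(j_k, l) for all k, then σ_{j₁}^{m_{j₁}r₁} ∘ ⋯ ∘ σ_{j_s}^{m_{j_s}r_s}(J) = J + N·min(·, l) componentwise, i.e. the N-th power of the linear time evolution T_l on J̄(m) (which adds min(j,l) to each entry of the j-block) agrees on J with a slide; hence [T_l^N(J)] = [J] in J(m) = J̄(m)/≃. -/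

import Mathlib

/-- The vacancy number `p_j = L - 2 Σ_k min(j,k) m_k`. -/
def vacancy (L : ℕ) (m : ℕ →₀ ℕ) (j : ℕ) : ℤ :=
  (L : ℤ) - 2 * ∑ k ∈ m.support, (min j k : ℤ) * (m k : ℤ)

/-- `J ∈ J̄(m)`: on each block `j ∈ H = supp(m)`, the sequence `(J_i)_{i∈ℤ}` is
weakly increasing and quasi-periodic: `J_{i+m_j} = J_i + p_j`. -/
def InJbar (L : ℕ) (m : ℕ →₀ ℕ) (J : ℕ → ℤ → ℤ) : Prop :=
  ∀ j ∈ m.support, (∀ i : ℤ, J j i ≤ J j (i + 1)) ∧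
    ∀ i : ℤ, J j (i + (m j : ℤ)) = J j i + vacancy L m j

/-- The power `σ_k^t` (`t ∈ ℤ`) of the slide `σ_k`:
`(σ_k^t J)^{(j)}_i = J^{(j)}_{i + t·δ_{j,k}} + 2 min(j,k)·t`. -/
def slideZ (k : ℕ) (t : ℤ) (J : ℕ → ℤ → ℤ) : ℕ → ℤ → ℤ :=
  fun j i => J j (i + (if j = k then t else 0)) + 2 * (min j k : ℤ) * t

/-- Iterated quasi-periodicity with integer multiple. -/
lemma per_pow (p : ℤ) (mj : ℕ) (f : ℤ → ℤ) (hf : ∀ i, f (i + (mj : ℤ)) = f i + p) :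
    ∀ (t : ℤ) (i : ℤ), f (i + (mj : ℤ) * t) = f i + p * t := by
  intro t
  induction t using Int.induction_on with
  | zero => intro i; simp
  | succ n ih =>
      intro i
      have h1 : i + (mj : ℤ) * ((n : ℤ) + 1) = (i + (mj : ℤ) * n) + (mj : ℤ) := by ring
      rw [h1, hf, ih]; ring
  | pred n ih =>
      intro i
      have h1 : i + (mj : ℤ) * (-(n : ℤ)) = (i + (mj : ℤ) * (-(n : ℤ) - 1)) + (mj : ℤ) := by
        ring
      have := hf (i + (mj : ℤ) * (-(n : ℤ) - 1))
      rw [← h1, ih] at this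
      linarith
  
/-- Value of the folded slide. -/
lemma fold_val (t : ℕ → ℤ) (ks : List ℕ) (J : ℕ → ℤ → ℤ) (j : ℕ) (i : ℤ) :
    ((ks.foldr (fun k F => slideZ k (t k) ∘ F) id) J) j i
      = J j (i + (ks.map (fun k => if j = k then t k else 0)).sum)
        + (ks.map (fun k : ℕ => 2 * min (j:ℤ) (k:ℤ) * t k)).sum := by
  induction ks generalizing i with
  | nil => simp
  | cons k ks ih =>
      simp only [List.foldr_cons, Function.comp_apply, slideZ, List.map_cons, List.sum_cons]
      rw [ih, add_assoc i]
      ring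

theorem stmt19 (L : ℕ) (hL : 0 < L) (m : ℕ →₀ ℕ) (h0 : m 0 = 0)
    (hm : 2 * ∑ j ∈ m.support, j * m j ≤ L)
    (l : ℕ) (hl : 1 ≤ l)
    (J : ℕ → ℤ → ℤ) (hJ : InJbar L m J)
    (N : ℕ) (hN : 0 < N) (r : ℕ → ℤ)
    (hr : ∀ k ∈ m.support,
      vacancy L m k * r k + 2 * ∑ a ∈ m.support, (min k a : ℤ) * (m a : ℤ) * r a
        = (N : ℤ) * (min k l : ℤ)) :
    ∀ j ∈ m.support, ∀ i : ℤ,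
      (((m.support.sort (· ≤ ·)).foldr
          (fun k F => slideZ k ((m k : ℤ) * r k) ∘ F) id) J) j i
        = J j i + (N : ℤ) * (min j l : ℤ) := by
  intro j hj i
  rw [fold_val]
  have hperm : (m.support.sort (· ≤ ·)).Perm m.support.toList :=
    Finset.sort_perm_toList _ _
  have hsum1 : ((m.support.sort (· ≤ ·)).map
      (fun k => if j = k then (m k : ℤ) * r k else 0)).sum
      = ∑ k ∈ m.support, (if j = k then (m k : ℤ) * r k else 0) := by
    rw [List.Perm.sum_eq (hperm.map _)]
    exact Finset.sum_map_toList _ _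
  have hsum2 : ((m.support.sort (· ≤ ·)).map
      (fun k : ℕ => 2 * min (j:ℤ) (k:ℤ) * ((m k : ℤ) * r k))).sum
      = ∑ k ∈ m.support, 2 * min (j:ℤ) (k:ℤ) * ((m k : ℤ) * r k) := by
    rw [List.Perm.sum_eq (hperm.map _)]
    exact Finset.sum_map_toList _ _
  rw [hsum1, hsum2, Finset.sum_ite_eq, if_pos hj]
  have hper := (hJ j hj).2
  rw [per_pow (vacancy L m j) (m j) (J j) hper (r j) i]
  have key := hr j hj
  have hs : ∑ k ∈ m.support, 2 * min (j:ℤ) (k:ℤ) * ((m k : ℤ) * r k)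
      = 2 * ∑ a ∈ m.support, (min j a : ℤ) * (m a : ℤ) * r a := by
    rw [Finset.mul_sum]; apply Finset.sum_congr rfl; intro a _; ring
  rw [hs]
  linarith
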